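/- Let f be a real polynomial of degree K > 1 with positive leading coefficient such that all complex roots of f' are real, listed with multiplicity as β_{K−1} ≤ ... ≤ β_1. Then all complex roots of f are real if and only if f(β_i) ≤ 0 for every odd i with 1 ≤ i ≤ K−1 and f(β_i) ≥ 0 for every even i with 1 ≤ i ≤ K−1. -/

import Mathlib

open Polynomial

section helpers
open Multiset in

theorem aux_rolle_filter (p : ℝ[X]) (q : ℝ → Prop) [DecidablePred q]
    (hq : ∀ ⦃a z b : ℝ⦄, q a → q b → a < z → z < b → q z) :
    Multiset.card (p.roots.filter q) ≤ Multiset.card ((derivative p).roots.filter q) + 1 := by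
  rcases eq_or_ne p 0 with rfl | hp
  · simp
  set R := (p.roots.filter q).toFinset with hRdef
  set D := ((derivative p).roots.filter q).toFinset with hDdef
  have hR : ∀ x ∈ R, p.IsRoot x ∧ q x := by
    intro x hx
    rw [hRdef, Multiset.mem_toFinset, Multiset.mem_filter, mem_roots hp] at hx
    exact hx
  have hfin : R.card ≤ (D \ R).card + 1 := by
    rcases eq_or_ne (derivative p) 0 with hp' | hp'
    · have : R.card = 0 := by
        rw [hRdef, eq_C_of_derivative_eq_zero hp']
        simp [roots_C]
      omega
    refine Finset.card_le_diff_of_interleaved fun x hx y hy hxy _ => ?_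
    obtain ⟨hx1, hx2⟩ := hR x hx
    obtain ⟨hy1, hy2⟩ := hR y hy
    obtain ⟨z, hz1, hz2⟩ := exists_deriv_eq_zero hxy p.continuousOn (hx1.trans hy1.symm)
    refine ⟨z, ?_, hz1.1, hz1.2⟩
    rw [hDdef, Multiset.mem_toFinset, Multiset.mem_filter, mem_roots hp']
    exact ⟨by rwa [IsRoot, ← p.deriv], hq hx2 hy2 hz1.1 hz1.2⟩
  calc Multiset.card (p.roots.filter q)
      = ∑ x ∈ R, (p.roots.filter q).count x := (Multiset.toFinset_sum_count_eq _).symm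
    _ = ∑ x ∈ R, ((p.roots.filter q).count x - 1 + 1) :=
      (Finset.sum_congr rfl fun x hx => (tsub_add_cancel_of_le <|
        Nat.succ_le_iff.2 <| Multiset.count_pos.2 <| Multiset.mem_toFinset.1 hx).symm)
    _ = (∑ x ∈ R, ((p.roots.filter q).count x - 1)) + R.card := by
      simp only [Finset.sum_add_distrib, Finset.card_eq_sum_ones]
    _ ≤ (∑ x ∈ R, ((derivative p).roots.filter q).count x) + ((D \ R).card + 1) := by
      refine add_le_add (Finset.sum_le_sum fun x hx => ?_) hfin
      have hqx := (hR x hx).2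
      rw [Multiset.count_filter, if_pos hqx, Multiset.count_filter, if_pos hqx,
        count_roots, count_roots]
      exact rootMultiplicity_sub_one_le_derivative_rootMultiplicity _ _
    _ ≤ (∑ x ∈ R, ((derivative p).roots.filter q).count x) +
          ((∑ x ∈ D \ R, ((derivative p).roots.filter q).count x) + 1) := by
      refine add_le_add_right (add_le_add_left ((Finset.card_eq_sum_ones _).trans_le ?_) _) _
      refine Finset.sum_le_sum fun x hx => Nat.succ_le_iff.2 ?_
      rw [Multiset.count_pos, ← Multiset.mem_toFinset]
      exact (Finset.mem_sdiff.1 hx).1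
    _ = Multiset.card ((derivative p).roots.filter q) + 1 := by
      rw [← add_assoc, ← Finset.sum_union Finset.disjoint_sdiff, Finset.union_sdiff_self_eq_union,
        ← Multiset.toFinset_sum_count_eq, ← Finset.sum_subset Finset.subset_union_right]
      intro x _ hx₂
      simpa only [hDdef, Multiset.mem_toFinset, Multiset.count_eq_zero] using hx₂

theorem aux_neg_prod (s : Multiset ℝ) (h : ∀ x ∈ s, x < 0) :
    0 < (-1 : ℝ) ^ (Multiset.card s) * s.prod := by
  induction s using Multiset.induction with
  | empty => simp
  | cons a s ih =>
    have ha : a < 0 := h a (Multiset.mem_cons_self a s)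
    have hs := ih fun x hx => h x (Multiset.mem_cons_of_mem hx)
    rw [Multiset.card_cons, Multiset.prod_cons, pow_succ]
    calc (0:ℝ) < ((-1) ^ (Multiset.card s) * s.prod) * ((-1) * a) := by
          exact mul_pos hs (by nlinarith)
      _ = (-1) ^ Multiset.card s * -1 * (a * s.prod) := by ring


theorem aux_real_of_card (f : ℝ[X]) (hf : f ≠ 0)
    (hcard : Multiset.card f.roots = f.natDegree) :
    ∀ z : ℂ, Polynomial.aeval z f = 0 → z.im = 0 := by
  intro z hz
  have hfe := C_leadingCoeff_mul_prod_multiset_X_sub_C hcard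
  rw [← hfe] at hz
  rw [map_mul, aeval_C, map_multiset_prod, Multiset.map_map] at hz
  have hc : (algebraMap ℝ ℂ) f.leadingCoeff ≠ 0 := by
    simpa using leadingCoeff_ne_zero.2 hf
  have h0 : (Multiset.map (fun a => Polynomial.aeval z (X - C a)) f.roots).prod = 0 :=
    by exact (mul_eq_zero.1 hz).resolve_left hc
  have hw := Multiset.prod_eq_zero_iff.1 h0
  obtain ⟨a, _, ha⟩ := Multiset.mem_map.1 hw
  have : z = (a : ℂ) := by
    have h' : Polynomial.aeval z (X - C a) = z - (a:ℂ) := by simp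
    rw [h'] at ha
    linear_combination ha
  rw [this]
  simp

theorem aux_card_of_real (f : ℝ[X]) (hf : f ≠ 0)
    (h : ∀ z : ℂ, Polynomial.aeval z f = 0 → z.im = 0) :
    Multiset.card f.roots = f.natDegree := by
  set φ := algebraMap ℝ ℂ with hφ
  have hinj : Function.Injective φ := (algebraMap ℝ ℂ).injective
  have hfc : f.map φ ≠ 0 := (Polynomial.map_ne_zero_iff hinj).2 hf
  have h1 : Multiset.card (f.map φ).roots = f.natDegree := by
    rw [← natDegree_map_eq_of_injective hinj f]
    exact splits_iff_card_roots.1 (IsAlgClosed.splits (f.map φ))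
  have h2 : (f.map φ).roots ≤ f.roots.map (Complex.ofReal) := by
    rw [Multiset.le_iff_count]
    intro z
    by_cases hz : z ∈ (f.map φ).roots
    · have hzr : (Polynomial.aeval z) f = 0 := by
        rw [aeval_def, ← eval_map]
        exact (mem_roots hfc).1 hz
      have him : z.im = 0 := h z hzr
      have hzre : z = ((z.re : ℝ) : ℂ) := Complex.ext (by simp) (by simp [him])
      have hφz : φ z.re = z := by rw [hφ]; simpa using hzre.symm
      rw [Polynomial.count_roots, ← hφz, ← eq_rootMultiplicity_map hinj]
      have : Multiset.count z (Multiset.map Complex.ofReal f.roots)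
          = Multiset.count z.re f.roots := by
        rw [hzre]
        exact Multiset.count_map_eq_count' _ _ (fun a b hab => by exact_mod_cast hab) _
      rw [hφz, this, Polynomial.count_roots]
    · rw [Multiset.count_eq_zero.2 hz]
      exact Nat.zero_le _
  have h3 : f.natDegree ≤ Multiset.card f.roots := by
    calc f.natDegree = Multiset.card (f.map φ).roots := h1.symm
      _ ≤ Multiset.card (f.roots.map (Complex.ofReal)) := Multiset.card_le_card h2
      _ = Multiset.card f.roots := Multiset.card_map _ _
  exact le_antisymm (f.card_roots' ) h3

end helpers

theorem stmt3 (f : Polynomial ℝ) (hK : 1 < f.natDegree) (hl : 0 < f.leadingCoeff)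
    (β : Fin (f.natDegree - 1) → ℝ) (hanti : Antitone β)
    (hroots : (Polynomial.derivative f).roots = ↑(List.ofFn β)) :
    (∀ z : ℂ, Polynomial.aeval z f = 0 → z.im = 0) ↔
      (∀ i : Fin (f.natDegree - 1),
        (Odd (i.1 + 1) → f.eval (β i) ≤ 0) ∧ (Even (i.1 + 1) → 0 ≤ f.eval (β i))) := by
  classical
  have hf0 : f ≠ 0 := fun h => by simp [h] at hK
  have hg : (derivative f).roots = Multiset.map β Finset.univ.val := by
    rw [hroots, ← Fin.univ_val_map]
  have hcount : ∀ (p : ℝ → Prop) (hp : DecidablePred p),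
      Multiset.card ((derivative f).roots.filter p)
        = (Finset.univ.filter (fun i => p (β i))).card := by
    intro p hp
    rw [hg, ← Multiset.countP_eq_card_filter, Multiset.countP_map,
        Finset.card_def, Finset.filter_val]
  constructor
  · -- forward
    intro hreal i
    have hcardf : Multiset.card f.roots = f.natDegree := aux_card_of_real f hf0 hreal
    by_cases hx : f.eval (β i) = 0
    · exact ⟨fun _ => le_of_eq hx, fun _ => ge_of_eq hx⟩
    set x := β i with hxdef
    set A := f.roots.filter (fun r => x < r) with hA
    set B := f.roots.filter (fun r => r < x) with hB
    have hne : ∀ r ∈ f.roots, r ≠ x := by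
      intro r hr hrx
      exact hx (by rw [← hrx]; exact (mem_roots hf0).1 hr)
    have hAB : Multiset.card A + Multiset.card B = f.natDegree := by
      have h1 : f.roots.filter (fun r => ¬ x < r) = B := by
        apply Multiset.filter_congr
        intro r hr
        have := hne r hr
        constructor
        · intro h'; rcases lt_trichotomy r x with h | h | h
          · exact h
          · exact absurd h this
          · exact absurd h h'
        · intro h'; exact not_lt.2 h'.le
      rw [← hcardf, ← Multiset.filter_add_not (fun r => x < r) f.roots,
        Multiset.card_add, h1]
    -- counts on derivative side
    have hup := hcount (fun r => x < r) inferInstance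
    have hdn := hcount (fun r => r < x) inferInstance
    have hmid := hcount (fun r => r = x) inferInstance
    have hgsum : (Finset.univ.filter (fun j => x < β j)).card
        + (Finset.univ.filter (fun j => β j < x)).card
        + (Finset.univ.filter (fun j => β j = x)).card = f.natDegree - 1 := by
      have h1 := Finset.card_filter_add_card_filter_not
        (s := (Finset.univ : Finset (Fin (f.natDegree - 1)))) (p := fun j => x < β j)
      have h2 := Finset.card_filter_add_card_filter_not
        (s := Finset.univ.filter (fun j : Fin (f.natDegree - 1) => ¬ x < β j))
        (p := fun j => β j < x)
      have e1 : (Finset.univ.filter (fun j : Fin (f.natDegree-1) => ¬ x < β j)).filter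
          (fun j => β j < x) = Finset.univ.filter (fun j => β j < x) := by
        ext j; simp only [Finset.mem_filter, Finset.mem_univ, true_and]
        exact ⟨fun h => h.2, fun h => ⟨not_lt.2 h.le, h⟩⟩
      have e2 : (Finset.univ.filter (fun j : Fin (f.natDegree-1) => ¬ x < β j)).filter
          (fun j => ¬ β j < x) = Finset.univ.filter (fun j => β j = x) := by
        ext j; simp only [Finset.mem_filter, Finset.mem_univ, true_and]
        constructor
        · rintro ⟨h1', h2'⟩; exact le_antisymm (not_lt.1 h1') (not_lt.1 h2')
        · intro h'; rw [h']; simp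
      rw [e1, e2] at h2
      rw [Finset.card_univ, Fintype.card_fin] at h1
      omega
    have hrup : Multiset.card A ≤ (Finset.univ.filter (fun j => x < β j)).card + 1 := by
      rw [← hup]
      exact aux_rolle_filter f _ (fun a z b ha hb haz hzb => ha.trans haz)
    have hrdn : Multiset.card B ≤ (Finset.univ.filter (fun j => β j < x)).card + 1 := by
      rw [← hdn]
      exact aux_rolle_filter f _ (fun a z b ha hb haz hzb => hzb.trans hb)
    have hmid1 : 1 ≤ (Finset.univ.filter (fun j => β j = x)).card := by
      refine Finset.card_pos.2 ⟨i, ?_⟩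
      simp [hxdef]
    have hK1 : 1 < f.natDegree := hK
    -- deduce equalities
    have hmideq : (Finset.univ.filter (fun j => β j = x)).card = 1 := by omega
    have hcardA : Multiset.card A = i.1 + 1 := by
      have hfe : Finset.univ.filter (fun j => x < β j) = Finset.Iio i := by
        have huniq : ∀ j, β j = x → j = i := by
          intro j hj
          obtain ⟨a, ha⟩ := Finset.card_eq_one.1 hmideq
          have hi : i ∈ Finset.univ.filter (fun j => β j = x) := by simp [hxdef]
          have hj' : j ∈ Finset.univ.filter (fun j => β j = x) := by simp [hj]
          rw [ha, Finset.mem_singleton] at hi hj'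
          rw [hj', hi]
        ext j
        simp only [Finset.mem_filter, Finset.mem_univ, true_and, Finset.mem_Iio]
        constructor
        · intro h'
          by_contra hji
          have : β j ≤ x := hxdef ▸ hanti (not_lt.1 hji)
          exact absurd h' (not_lt.2 this)
        · intro hji
          have h1 : x ≤ β j := hxdef ▸ hanti hji.le
          rcases h1.lt_or_eq with h | h
          · exact h
          · exact absurd (huniq j h.symm) (ne_of_lt hji)
      have hcup : (Finset.univ.filter (fun j => x < β j)).card = i.1 := by
        rw [hfe, Fin.card_Iio]
      omega
    -- sign computation
    have hsplit : f.roots = A + B := by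
      conv_lhs => rw [← Multiset.filter_add_not (fun r => x < r) f.roots]
      congr 1
      apply Multiset.filter_congr
      intro r hr
      have := hne r hr
      constructor
      · intro h'; rcases lt_trichotomy r x with h | h | h
        · exact h
        · exact absurd h this
        · exact absurd h h'
      · intro h'; exact not_lt.2 h'.le
    have heval : f.eval x = f.leadingCoeff *
        ((A.map (fun a => x - a)).prod * (B.map (fun a => x - a)).prod) := by
      conv_lhs => rw [← C_leadingCoeff_mul_prod_multiset_X_sub_C hcardf]
      rw [eval_mul, eval_C, eval_multiset_prod, Multiset.map_map]
      congr 1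
      rw [hsplit, Multiset.map_add, Multiset.prod_add]
      congr 1 <;> · congr 1; ext a; simp
    have hApos : 0 < (-1:ℝ)^(Multiset.card A) * (A.map (fun a => x - a)).prod := by
      have h' := aux_neg_prod (A.map (fun a => x - a)) ?_
      · rwa [Multiset.card_map] at h'
      intro y hy
      obtain ⟨a, ha, rfl⟩ := Multiset.mem_map.1 hy
      have : x < a := (Multiset.mem_filter.1 ha).2
      linarith
    have hBpos : 0 < (B.map (fun a => x - a)).prod := by
      refine Multiset.prod_pos ?_
      intro y hy
      obtain ⟨a, ha, rfl⟩ := Multiset.mem_map.1 hy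
      have : a < x := (Multiset.mem_filter.1 ha).2
      linarith
    have hsign : 0 < (-1:ℝ)^(i.1+1) * f.eval x := by
      have he : (-1:ℝ)^(i.1+1) * f.eval x = f.leadingCoeff *
          (((-1:ℝ)^(Multiset.card A) * (A.map (fun a => x - a)).prod)
            * (B.map (fun a => x - a)).prod) := by
        rw [heval, hcardA]; ring
      rw [he]
      exact mul_pos hl (mul_pos hApos hBpos)
    constructor
    · intro hodd
      rw [Odd.neg_one_pow hodd] at hsign
      linarith
    · intro heven
      rw [Even.neg_one_pow heven] at hsign
      linarith
  · -- backward
    intro hsign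
    refine aux_real_of_card f hf0 ?_
    have hdeg : 0 < f.degree := natDegree_pos_iff_degree_pos.1 (by omega)
    set S := f.roots.toFinset with hS
    set I := Finset.univ.filter (fun i : Fin (f.natDegree-1) => f.eval (β i) ≠ 0) with hI
    set m := I.card with hm
    have hmn : m ≤ f.natDegree - 1 := by
      calc m ≤ (Finset.univ : Finset (Fin (f.natDegree-1))).card := Finset.card_le_card (Finset.filter_subset _ _)
        _ = f.natDegree - 1 := by rw [Finset.card_univ, Fintype.card_fin]
    have hnotI : ∀ j, j ∉ I → f.eval (β j) = 0 := by
      intro j hj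
      by_contra h
      exact hj (Finset.mem_filter.2 ⟨Finset.mem_univ j, h⟩)
    have hmemI : ∀ j ∈ I, f.eval (β j) ≠ 0 := fun j hj => (Finset.mem_filter.1 hj).2
    have hIsign : ∀ i ∈ I, (Odd (i.1+1) → f.eval (β i) < 0) ∧ (Even (i.1+1) → 0 < f.eval (β i)) := by
      intro i hi
      have hne0 := hmemI i hi
      exact ⟨fun ho => lt_of_le_of_ne ((hsign i).1 ho) hne0,
        fun he => lt_of_le_of_ne ((hsign i).2 he) (Ne.symm hne0)⟩
    have hrootS : ∀ j, j ∉ I → β j ∈ S := by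
      intro j hj
      exact Multiset.mem_toFinset.2 ((mem_roots hf0).2 (hnotI j hj))
    -- B1 : card roots = sum of derivative multiplicities + S.card
    have hmult : ∀ a ∈ S, f.roots.count a = (derivative f).rootMultiplicity a + 1 := by
      intro a ha
      have haroot : f.IsRoot a := (mem_roots hf0).1 (Multiset.mem_toFinset.1 ha)
      have h1 := derivative_rootMultiplicity_of_root haroot
      have h2 : 1 ≤ f.rootMultiplicity a := (rootMultiplicity_pos hf0).2 haroot
      rw [count_roots]
      omega
    have hB1 : Multiset.card f.roots
        = (∑ a ∈ S, (derivative f).rootMultiplicity a) + S.card := by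
      rw [← Multiset.toFinset_sum_count_eq f.roots, ← hS]
      calc ∑ a ∈ S, f.roots.count a
          = ∑ a ∈ S, ((derivative f).rootMultiplicity a + 1) := Finset.sum_congr rfl hmult
        _ = _ := by rw [Finset.sum_add_distrib, Finset.card_eq_sum_ones S]
    -- B2 : sum of derivative multiplicities over S = (n) - m
    have hcnt : ∀ a : ℝ, (derivative f).rootMultiplicity a
        = (Finset.univ.filter (fun i => β i = a)).card := by
      intro a
      rw [← count_roots, hg, Multiset.count_map, Finset.card_def, Finset.filter_val]
      congr 1
      exact Multiset.filter_congr (fun i _ => eq_comm)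
    have hB2 : (∑ a ∈ S, (derivative f).rootMultiplicity a) = (f.natDegree - 1) - m := by
      have hfib := Finset.card_eq_sum_card_fiberwise
        (s := Finset.univ.filter (fun i : Fin (f.natDegree-1) => f.eval (β i) = 0))
        (t := S) (f := β)
        (fun i hi => hrootS i (by
          intro hiI
          exact hmemI i hiI (Finset.mem_filter.1 hi).2))
      have hcompl : (Finset.univ.filter (fun i : Fin (f.natDegree-1) => f.eval (β i) = 0)).card
          = (f.natDegree - 1) - m := by
        have h1 := Finset.card_filter_add_card_filter_not
          (s := (Finset.univ : Finset (Fin (f.natDegree-1))))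
          (p := fun i => f.eval (β i) ≠ 0)
        have e1 : (Finset.univ.filter (fun i : Fin (f.natDegree-1) => ¬ f.eval (β i) ≠ 0))
            = Finset.univ.filter (fun i => f.eval (β i) = 0) := by
          ext j; simp
        rw [e1, Finset.card_univ, Fintype.card_fin] at h1
        rw [hm, hI]
        omega
      rw [← hcompl, hfib]
      refine Finset.sum_congr rfl fun a ha => ?_
      rw [hcnt a]
      congr 1
      ext i
      simp only [Finset.mem_filter, Finset.mem_univ, true_and]
      constructor
      · intro h
        refine ⟨?_, h⟩
        rw [h]
        exact (mem_roots hf0).1 (Multiset.mem_toFinset.1 ha)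
      · rintro ⟨-, h⟩
        exact h
    -- B3 : strict decrease on I
    have hstrict : ∀ i ∈ I, ∀ j ∈ I, i < j → β j < β i := by
      intro i hi j hj hij
      rcases lt_or_eq_of_le (hanti hij.le) with h | h
      · exact h
      exfalso
      have hlt : i.1 + 1 < f.natDegree - 1 := by
        have := j.2
        have : i.1 < j.1 := hij
        omega
      set i' : Fin (f.natDegree - 1) := ⟨i.1+1, hlt⟩ with hi'
      have hii' : i ≤ i' := by simp [hi', Fin.le_def]
      have hi'j : i' ≤ j := by
        simp only [hi', Fin.le_def]
        exact hij
      have heq' : β i' = β i := le_antisymm (hanti hii') (h ▸ hanti hi'j)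
      have hne0 := hmemI i hi
      rcases Nat.even_or_odd (i.1+1) with he | ho
      · have h1 : 0 < f.eval (β i) := (hIsign i hi).2 he
        have h2 : f.eval (β i') ≤ 0 := (hsign i').1 (by
          have : i'.1 + 1 = (i.1 + 1) + 1 := rfl
          rw [this]
          exact he.add_one)
        rw [heq'] at h2
        linarith
      · have h1 : f.eval (β i) < 0 := (hIsign i hi).1 ho
        have h2 : 0 ≤ f.eval (β i') := (hsign i').2 (by
          have : i'.1 + 1 = (i.1 + 1) + 1 := rfl
          rw [this]
          exact ho.add_one)
        rw [heq'] at h2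
        linarith
    -- the key cardinality bound
    have hScard : m + 1 ≤ S.card := by
      rcases Finset.eq_empty_or_nonempty I with hIe | hIne
      · have hm0 : m = 0 := by simp [hm, hIe]
        have h0 : (⟨0, by omega⟩ : Fin (f.natDegree - 1)) ∉ I :=
          Finset.eq_empty_iff_forall_notMem.1 hIe _
        have : β ⟨0, by omega⟩ ∈ S := hrootS _ h0
        have : 1 ≤ S.card := Finset.card_pos.2 ⟨_, this⟩
        omega
      -- top root
      have htop : ∃ r, f.IsRoot r ∧ ∀ i ∈ I, β i < r := by
        set i₀ := I.min' hIne with hi₀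
        by_cases h0 : i₀.1 = 0
        · have hodd : Odd (i₀.1 + 1) := by rw [h0]; exact odd_one
          have hneg : f.eval (β i₀) < 0 := (hIsign i₀ (I.min'_mem hIne)).1 hodd
          have htend := f.tendsto_atTop_of_leadingCoeff_nonneg hdeg hl.le
          obtain ⟨b, hb1, hb2⟩ :=
            ((htend.eventually_gt_atTop 0).and (Filter.eventually_gt_atTop (β i₀))).exists
          obtain ⟨r, hr1, hr2⟩ := intermediate_value_Ioo hb2.le f.continuousOn ⟨hneg, hb1⟩
          exact ⟨r, hr2, fun i hi => lt_of_le_of_lt (hanti (I.min'_le i hi)) hr1.1⟩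
        · set j : Fin (f.natDegree - 1) := ⟨i₀.1 - 1, by omega⟩ with hj
          have hj_lt : j < i₀ := by
            simp only [hj, Fin.lt_def]
            omega
          have hjI : j ∉ I := fun hjm => absurd (I.min'_le j hjm) (not_le.2 hj_lt)
          refine ⟨β j, hnotI j hjI, ?_⟩
          intro i hi
          have h1 : β i ≤ β i₀ := hanti (I.min'_le i hi)
          have h2 : β i₀ ≤ β j := hanti hj_lt.le
          rcases lt_or_eq_of_le (h1.trans h2) with h | h
          · exact h
          exfalso
          have heq0 : β i₀ = β j := le_antisymm h2 (by rw [← h]; exact h1)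
          exact hmemI i₀ (I.min'_mem hIne) (by rw [heq0]; exact hnotI j hjI)
      -- middle/bottom roots
      have hmid : ∀ i ∈ I, ∃ r, f.IsRoot r ∧ r < β i ∧ ∀ j ∈ I, i < j → β j < r := by
        intro i hi
        set L := I.filter (fun j => i < j) with hL
        have hnotL : ∀ k ∈ I, i < k → k ∈ L := fun k hk hik => Finset.mem_filter.2 ⟨hk, hik⟩
        rcases Finset.eq_empty_or_nonempty L with hLe | hLne
        · by_cases hlast : i.1 + 1 < f.natDegree - 1
          · set j : Fin (f.natDegree - 1) := ⟨i.1+1, hlast⟩ with hj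
            have hij : i < j := by simp [hj, Fin.lt_def]
            have hjI : j ∉ I := fun hjm =>
              Finset.eq_empty_iff_forall_notMem.1 hLe _ (hnotL j hjm hij)
            refine ⟨β j, hnotI j hjI, ?_, ?_⟩
            · rcases lt_or_eq_of_le (hanti hij.le) with h | h
              · exact h
              exact absurd (by rw [← h]; exact hnotI j hjI) (hmemI i hi)
            · intro k hk hik
              exact absurd (hnotL k hk hik) (Finset.eq_empty_iff_forall_notMem.1 hLe k)
          · -- i is the last index
            have hKn : f.natDegree = i.1 + 2 := by
              have := i.2
              omega
            set p := f.comp (-X) with hp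
            have hpdeg : p.natDegree = f.natDegree := by
              rw [hp, natDegree_comp]
              simp
            have hplead : p.leadingCoeff = f.leadingCoeff * (-1)^f.natDegree := by
              rw [hp, leadingCoeff_comp (by simp : (-X : ℝ[X]).natDegree ≠ 0)]
              simp
            have hpdeg' : 0 < p.degree := natDegree_pos_iff_degree_pos.1 (by omega)
            have hpeval : ∀ y : ℝ, p.eval y = f.eval (-y) := by
              intro y
              rw [hp, eval_comp]
              simp
            have hnok : ∀ k ∈ I, i < k → False := by
              intro k hk hik
              exact absurd (hnotL k hk hik) (Finset.eq_empty_iff_forall_notMem.1 hLe k)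
            rcases Nat.even_or_odd (i.1+1) with he | ho
            · have hi0 : 0 < f.eval (β i) := (hIsign i hi).2 he
              have hlead : p.leadingCoeff ≤ 0 := by
                rw [hplead, hKn]
                have hoddK : Odd (i.1 + 2) := he.add_one
                rw [hoddK.neg_one_pow]
                linarith
              have htend := p.tendsto_atBot_of_leadingCoeff_nonpos hpdeg' hlead
              obtain ⟨b, hb1, hb2⟩ :=
                ((htend.eventually_lt_atBot 0).and (Filter.eventually_gt_atTop (-(β i)))).exists
              have hb1' : f.eval (-b) < 0 := by rw [← hpeval]; exact hb1
              have hlt : -b < β i := by linarith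
              obtain ⟨r, hr1, hr2⟩ := intermediate_value_Ioo hlt.le f.continuousOn ⟨hb1', hi0⟩
              exact ⟨r, hr2, hr1.2, fun k hk hik => absurd (hnok k hk hik) not_false⟩
            · have hi0 : f.eval (β i) < 0 := (hIsign i hi).1 ho
              have hlead : 0 ≤ p.leadingCoeff := by
                rw [hplead, hKn]
                have hevenK : Even (i.1 + 2) := by
                  rcases ho with ⟨t, ht⟩
                  exact ⟨t+1, by omega⟩
                rw [hevenK.neg_one_pow]
                linarith
              have htend := p.tendsto_atTop_of_leadingCoeff_nonneg hpdeg' hlead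
              obtain ⟨b, hb1, hb2⟩ :=
                ((htend.eventually_gt_atTop 0).and (Filter.eventually_gt_atTop (-(β i)))).exists
              have hb1' : 0 < f.eval (-b) := by rw [← hpeval]; exact hb1
              have hlt : -b < β i := by linarith
              obtain ⟨r, hr1, hr2⟩ := intermediate_value_Ioo' hlt.le f.continuousOn ⟨hi0, hb1'⟩
              exact ⟨r, hr2, hr1.2, fun k hk hik => absurd (hnok k hk hik) not_false⟩
        · set j' := L.min' hLne with hj'
          have hj'mem := L.min'_mem hLne
          have hj'I : j' ∈ I := (Finset.mem_filter.1 hj'mem).1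
          have hij' : i < j' := (Finset.mem_filter.1 hj'mem).2
          have hless : ∀ k ∈ I, i < k → j' ≤ k := fun k hk hik => L.min'_le k (hnotL k hk hik)
          by_cases hadj : j'.1 = i.1 + 1
          · have hji : β j' < β i := hstrict i hi j' hj'I hij'
            have hlab : j'.1 + 1 = (i.1 + 1) + 1 := by omega
            rcases Nat.even_or_odd (i.1+1) with he | ho
            · have hipos : 0 < f.eval (β i) := (hIsign i hi).2 he
              have hjneg : f.eval (β j') < 0 := (hIsign j' hj'I).1 (by rw [hlab]; exact he.add_one)
              obtain ⟨r, hr1, hr2⟩ := intermediate_value_Ioo hji.le f.continuousOn ⟨hjneg, hipos⟩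
              refine ⟨r, hr2, hr1.2, ?_⟩
              intro k hk hik
              exact lt_of_le_of_lt (hanti (hless k hk hik)) hr1.1
            · have hineg : f.eval (β i) < 0 := (hIsign i hi).1 ho
              have hjpos : 0 < f.eval (β j') := (hIsign j' hj'I).2 (by
                rw [hlab]
                rcases ho with ⟨t, ht⟩
                exact ⟨t+1, by omega⟩)
              obtain ⟨r, hr1, hr2⟩ := intermediate_value_Ioo' hji.le f.continuousOn ⟨hineg, hjpos⟩
              refine ⟨r, hr2, hr1.2, ?_⟩
              intro k hk hik
              exact lt_of_le_of_lt (hanti (hless k hk hik)) hr1.1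
          · set j : Fin (f.natDegree - 1) := ⟨i.1+1, by
              have h1 : i.1 < j'.1 := hij'
              have h2 := j'.2
              omega⟩ with hj
            have hij : i < j := by simp [hj, Fin.lt_def]
            have hjj' : j < j' := by
              simp only [hj, Fin.lt_def]
              have h1 : i.1 < j'.1 := hij'
              omega
            have hjI : j ∉ I := by
              intro hjm
              have := hless j hjm hij
              exact absurd this (not_le.2 hjj')
            have hj0 : f.eval (β j) = 0 := hnotI j hjI
            refine ⟨β j, hj0, ?_, ?_⟩
            · rcases lt_or_eq_of_le (hanti hij.le) with h | h
              · exact h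
              exact absurd (by rw [← h]; exact hj0) (hmemI i hi)
            · intro k hk hik
              have h1 : β k ≤ β j := hanti ((hjj'.le).trans (hless k hk hik))
              rcases lt_or_eq_of_le h1 with h | h
              · exact h
              exact absurd (by rw [h]; exact hj0) (hmemI k hk)
      obtain ⟨r₀, hr₀root, hr₀gt⟩ := htop
      choose ρ hρroot hρlt hρgt using hmid
      set F : Finset ℝ := insert r₀ (I.attach.image (fun x => ρ x.1 x.2)) with hF
      have hsub : F ⊆ S := by
        intro r hr
        rw [hF] at hr
        rcases Finset.mem_insert.1 hr with rfl | hr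
        · exact Multiset.mem_toFinset.2 ((mem_roots hf0).2 hr₀root)
        · obtain ⟨x, _, rfl⟩ := Finset.mem_image.1 hr
          exact Multiset.mem_toFinset.2 ((mem_roots hf0).2 (hρroot x.1 x.2))
      have himg : (I.attach.image (fun x => ρ x.1 x.2)).card = m := by
        rw [Finset.card_image_of_injOn, Finset.card_attach]
        intro x hx y hy hxy
        have hxy' : ρ x.1 x.2 = ρ y.1 y.2 := hxy
        by_contra hne
        have hne' : x.1 ≠ y.1 := fun h => hne (Subtype.ext h)
        rcases lt_or_gt_of_ne hne' with h | h
        · have h1 : β y.1 < ρ x.1 x.2 := hρgt x.1 x.2 y.1 y.2 h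
          have h2 : ρ y.1 y.2 < β y.1 := hρlt y.1 y.2
          rw [hxy'] at h1
          linarith
        · have h1 : β x.1 < ρ y.1 y.2 := hρgt y.1 y.2 x.1 x.2 h
          have h2 : ρ x.1 x.2 < β x.1 := hρlt x.1 x.2
          rw [← hxy'] at h1
          linarith
      have hnm : r₀ ∉ I.attach.image (fun x => ρ x.1 x.2) := by
        intro hmem
        obtain ⟨x, _, hxe⟩ := Finset.mem_image.1 hmem
        have hxe' : ρ x.1 x.2 = r₀ := hxe
        have h1 : ρ x.1 x.2 < β x.1 := hρlt x.1 x.2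
        have h2 : β x.1 < r₀ := hr₀gt x.1 x.2
        rw [hxe'] at h1
        linarith
      have hFcard : F.card = m + 1 := by
        rw [hF, Finset.card_insert_of_notMem hnm, himg]
      calc m + 1 = F.card := hFcard.symm
        _ ≤ S.card := Finset.card_le_card hsub
    have hfin : f.natDegree ≤ Multiset.card f.roots := by
      rw [hB1, hB2]
      omega
    exact le_antisymm (card_roots' f) hfin
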